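/- arXiv:2107.07765 — 4 statements merged into one kernel-verified Lean document; each statement's English description precedes it below -/
import Mathlib

section
/- Let G be a locally compact Hausdorff topological group and let X be a totally disconnected locally compact Hausdorff space equipped with a continuous, faithful action of G such that for every non-empty compact open subset α of X, the induced action of the rigid stabilizer R_G(α) on α is minimal and proximal. Then for every compact subset P of G with 1 ∉ P there exists an integer r ≥ 1 such that every closed subgroup H of G satisfying gHg⁻¹ ∩ P ≠ ∅ for all g ∈ G has at most r finite orbits in X. -/
set_option linter.unusedSectionVars false
open Set

section AuxTop

variable {X : Type*} [TopologicalSpace X] [LocallyCompactSpace X] [T2Space X]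
  [TotallyDisconnectedSpace X]

/-- compact open neighborhood basis -/
theorem cpo_aux {x : X} {U : Set X} (hU : IsOpen U) (hx : x ∈ U) :
    ∃ K : Set X, IsCompact K ∧ IsOpen K ∧ x ∈ K ∧ K ⊆ U := by
  obtain ⟨s, hs, hxs, hsU⟩ := exists_compact_subset hU hx
  obtain ⟨V, hV, hxV, hVs⟩ :=
    loc_compact_Haus_tot_disc_of_zero_dim.mem_nhds_iff.mp
      (isOpen_interior.mem_nhds hxs)
  exact ⟨V, hs.of_isClosed_subset hV.isClosed (hVs.trans interior_subset), hV.isOpen, hxV,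
    (hVs.trans interior_subset).trans hsU⟩

theorem fin_cover_aux {S O : Set X} (hS : S.Finite) (hO : IsOpen O) (hSO : S ⊆ O) :
    ∃ K : Set X, IsCompact K ∧ IsOpen K ∧ S ⊆ K ∧ K ⊆ O := by
  revert hSO
  refine Set.Finite.induction_on
    (motive := fun S _ => S ⊆ O → ∃ K : Set X, IsCompact K ∧ IsOpen K ∧ S ⊆ K ∧ K ⊆ O)
    S hS (fun _ => ⟨∅, isCompact_empty, isOpen_empty, Subset.rfl, empty_subset _⟩) ?_
  intro a S' ha hS' IH hSO
  obtain ⟨K', hK'c, hK'o, hSK', hK'O⟩ := IH (fun x hx => hSO (Or.inr hx))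
  obtain ⟨Ka, hKac, hKao, haKa, hKaO⟩ := cpo_aux hO (hSO (Or.inl rfl))
  exact ⟨Ka ∪ K', hKac.union hK'c, hKao.union hK'o,
    insert_subset (Or.inl haKa) (hSK'.trans subset_union_right),
    union_subset hKaO hK'O⟩

theorem open_infinite_aux (hperf : ∀ a : X, ¬ IsOpen ({a} : Set X)) {O : Set X}
    (hO : IsOpen O) (hne : O.Nonempty) : O.Infinite := by
  intro hfin
  obtain ⟨x, hx⟩ := hne
  apply hperf x
  have h1 : IsClosed (O \ {x}) := hfin.diff.isClosed
  have h2 : O ∩ (O \ {x})ᶜ = {x} := by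
    ext y
    constructor
    · rintro ⟨hyO, hyc⟩
      simp only [mem_compl_iff, mem_diff, not_and, not_not] at hyc
      exact hyc hyO
    · rintro rfl
      exact ⟨hx, by simp⟩
  rw [← h2]
  exact hO.inter h1.isOpen_compl

theorem distinct_points_aux (hperf : ∀ a : X, ¬ IsOpen ({a} : Set X)) :
    ∀ (n : ℕ) (W : Fin n → Set X), (∀ i, IsOpen (W i)) → (∀ i, (W i).Nonempty) →
      ∃ w : Fin n → X, (∀ i, w i ∈ W i) ∧ Function.Injective w := by
  intro n
  induction n with
  | zero => exact fun W _ _ => ⟨Fin.elim0, fun i => i.elim0, fun i => i.elim0⟩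
  | succ n IH =>
    intro W hWo hWne
    obtain ⟨w, hw, hinj⟩ := IH (fun i => W i.castSucc) (fun i => hWo _) (fun i => hWne _)
    have hinf := open_infinite_aux hperf (hWo (Fin.last n)) (hWne _)
    obtain ⟨x, hxW, hxr⟩ := (hinf.diff (Set.finite_range w)).nonempty
    refine ⟨Fin.snoc w x, ?_, ?_⟩
    · intro i
      refine Fin.lastCases ?_ ?_ i
      · simpa using hxW
      · intro j; simpa using hw j
    · intro i j
      refine Fin.lastCases ?_ ?_ i
      · refine Fin.lastCases ?_ ?_ j
        · intro _; rfl
        · intro j' hij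
          rw [Fin.snoc_last, Fin.snoc_castSucc] at hij
          exact absurd ⟨j', hij.symm⟩ hxr
      · intro i'
        refine Fin.lastCases ?_ ?_ j
        · intro hij
          rw [Fin.snoc_castSucc, Fin.snoc_last] at hij
          exact absurd ⟨i', hij⟩ hxr
        · intro j' hij
          rw [Fin.snoc_castSucc, Fin.snoc_castSucc] at hij
          exact congrArg Fin.castSucc (hinj hij)

theorem sep_opens_aux :
    ∀ (n : ℕ) (S : Fin n → Set X), (∀ i, IsCompact (S i)) →
      (Pairwise fun i j => Disjoint (S i) (S j)) →
      ∃ O : Fin n → Set X, (∀ i, IsOpen (O i)) ∧ (∀ i, S i ⊆ O i) ∧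
        Pairwise fun i j => Disjoint (O i) (O j) := by
  intro n
  induction n with
  | zero =>
    exact fun S _ _ => ⟨Fin.elim0, fun i => i.elim0, fun i => i.elim0, fun {i} => i.elim0⟩
  | succ n IH =>
    intro S hSc hSd
    obtain ⟨O, hOo, hSO, hOd⟩ := IH (fun i => S i.castSucc) (fun i => hSc _)
      (fun i j hij => hSd (fun h => hij (Fin.castSucc_injective n h)))
    have sep : ∀ i : Fin n, SeparatedNhds (S i.castSucc) (S (Fin.last n)) := fun i =>
      SeparatedNhds.of_isCompact_isCompact (hSc _) (hSc _)
        (hSd (Fin.castSucc_lt_last i).ne)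
    choose A B hA hB hSA hSB hAB using sep
    refine ⟨Fin.snoc (fun i => O i ∩ A i) (⋂ i, B i), ?_, ?_, ?_⟩
    · intro i
      refine Fin.lastCases ?_ ?_ i
      · rw [Fin.snoc_last]; exact isOpen_iInter_of_finite hB
      · intro j; rw [Fin.snoc_castSucc]; exact (hOo j).inter (hA j)
    · intro i
      refine Fin.lastCases ?_ ?_ i
      · rw [Fin.snoc_last]; exact subset_iInter hSB
      · intro j; rw [Fin.snoc_castSucc]; exact subset_inter (hSO j) (hSA j)
    · intro i j
      refine Fin.lastCases ?_ ?_ i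
      · refine Fin.lastCases ?_ ?_ j
        · intro hij; exact absurd rfl hij
        · intro j' _
          rw [Fin.snoc_last, Fin.snoc_castSucc]
          exact Disjoint.mono (iInter_subset _ j') inter_subset_right (hAB j').symm
      · intro i'
        refine Fin.lastCases ?_ ?_ j
        · intro _
          rw [Fin.snoc_castSucc, Fin.snoc_last]
          exact Disjoint.mono inter_subset_right (iInter_subset _ i') (hAB i')
        · intro j' hij
          rw [Fin.snoc_castSucc, Fin.snoc_castSucc]
          have : i' ≠ j' := fun h => hij (congrArg Fin.castSucc h)
          exact Disjoint.mono inter_subset_left inter_subset_left (hOd this)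

theorem disjointify_aux (hperf : ∀ a : X, ¬ IsOpen ({a} : Set X)) (n : ℕ)
    (W : Fin n → Set X) (hWo : ∀ i, IsOpen (W i)) (hWne : ∀ i, (W i).Nonempty) :
    ∃ C : Fin n → Set X,
      (∀ i, IsCompact (C i) ∧ IsOpen (C i) ∧ (C i).Nonempty ∧ C i ⊆ W i) ∧
      Pairwise fun i j => Disjoint (C i) (C j) := by
  obtain ⟨w, hw, hinj⟩ := distinct_points_aux hperf n W hWo hWne
  obtain ⟨O, hOo, hSO, hOd⟩ := sep_opens_aux n (fun i => {w i})
    (fun i => isCompact_singleton)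
    (fun i j hij => by simpa using fun h => hij (hinj h))
  have hmem : ∀ i, w i ∈ W i ∩ O i := fun i => ⟨hw i, hSO i rfl⟩
  choose K hKc hKo hKmem hKsub using fun i => cpo_aux ((hWo i).inter (hOo i)) (hmem i)
  refine ⟨K, fun i => ⟨hKc i, hKo i, ⟨w i, hKmem i⟩, (hKsub i).trans inter_subset_left⟩,
    fun i j hij => ?_⟩
  exact Disjoint.mono ((hKsub i).trans inter_subset_right)
    ((hKsub j).trans inter_subset_right) (hOd hij)

theorem sep_fin_aux (n : ℕ) (S : Fin n → Set X) (hfin : ∀ i, (S i).Finite)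
    (hd : Pairwise fun i j => Disjoint (S i) (S j)) {D : Set X} (hD : IsOpen D)
    (hSD : ∀ i, S i ⊆ D) :
    ∃ E : Fin n → Set X,
      (∀ i, IsCompact (E i) ∧ IsOpen (E i) ∧ S i ⊆ E i ∧ E i ⊆ D) ∧
      Pairwise fun i j => Disjoint (E i) (E j) := by
  obtain ⟨O, hOo, hSO, hOd⟩ := sep_opens_aux n S (fun i => (hfin i).isCompact) hd
  choose K hKc hKo hSK hKsub using fun i =>
    fin_cover_aux (hfin i) ((hOo i).inter hD) (subset_inter (hSO i) (hSD i))
  refine ⟨K, fun i => ⟨hKc i, hKo i, hSK i, (hKsub i).trans inter_subset_right⟩,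
    fun i j hij => ?_⟩
  exact Disjoint.mono ((hKsub i).trans inter_subset_left)
    ((hKsub j).trans inter_subset_left) (hOd hij)

end AuxTop
section AuxAct

variable {G X : Type*} [Group G] [TopologicalSpace G] [TopologicalSpace X] [LocallyCompactSpace X] [T2Space X]
  [TotallyDisconnectedSpace X] [MulAction G X] [ContinuousSMul G X]

theorem rig_mem {α : Set X} {g : G} (hg : ∀ w ∉ α, g • w = w) {x : X} (hx : x ∈ α) :
    g • x ∈ α := by
  by_contra h
  have h2 : g • (g • x) = g • x := hg _ h
  have h3 : g • x = x := smul_left_cancel g h2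
  rw [h3] at h
  exact h hx

theorem rig_mul {α : Set X} {g k : G} (hg : ∀ w ∉ α, g • w = w) (hk : ∀ w ∉ α, k • w = w) :
    ∀ w ∉ α, (g * k) • w = w := fun w hw => by rw [mul_smul, hk w hw, hg w hw]

theorem list_prod_smul_fixed (l : List G) (s : X) (h : ∀ g ∈ l, g • s = s) :
    l.prod • s = s := by
  induction l with
  | nil => simp
  | cons g t IH =>
    rw [List.prod_cons, mul_smul, IH (fun g' hg' => h g' (List.mem_cons_of_mem g hg')),
      h g List.mem_cons_self]

theorem list_prod_smul_eq {n : ℕ} (β : Fin n → Set X)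
    (hβd : Pairwise fun i j => Disjoint (β i) (β j)) (c : Fin n → G)
    (hrig : ∀ j, ∀ w ∉ β j, c j • w = w) :
    ∀ ℓ : List (Fin n), ℓ.Nodup → ∀ i ∈ ℓ, ∀ s ∈ β i, (ℓ.map c).prod • s = c i • s := by
  intro ℓ
  induction ℓ with
  | nil => intro _ i hi; exact absurd hi List.not_mem_nil
  | cons j t IH =>
    intro hnd i hi s hs
    have hjt : j ∉ t := (List.nodup_cons.mp hnd).1
    rw [List.map_cons, List.prod_cons, mul_smul]
    rcases List.mem_cons.mp hi with rfl | hit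
    · have hfix : (t.map c).prod • s = s := by
        apply list_prod_smul_fixed
        intro g hg
        obtain ⟨k, hk, rfl⟩ := List.mem_map.mp hg
        have hkj : k ≠ i := fun h => hjt (h ▸ hk)
        exact hrig k s (Set.disjoint_right.mp (hβd hkj) hs)
      rw [hfix]
    · have hji : j ≠ i := fun h => hjt (h ▸ hit)
      rw [IH (List.nodup_cons.mp hnd).2 i hit s hs]
      have hmem : c i • s ∈ β i := rig_mem (hrig i) hs
      exact hrig j _ (Set.disjoint_right.mp (hβd hji) hmem)

/-- minimal-proximal contraction of a finite set towards a single point -/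
theorem contract_aux
    (hprox : ∀ α : Set X, IsCompact α → IsOpen α → α.Nonempty →
      ∀ x ∈ α, ∀ y ∈ α, ∃ z : X, (z, z) ∈
        closure {p : X × X | ∃ g : G, (∀ w ∉ α, g • w = w) ∧ p = (g • x, g • y)})
    (α : Set X) (hc : IsCompact α) (ho : IsOpen α) (hne : α.Nonempty)
    (F : Finset X) (hF : ↑F ⊆ α) :
    ∃ z ∈ α, ∀ V : Set X, IsOpen V → z ∈ V →
      ∃ g : G, (∀ w ∉ α, g • w = w) ∧ ∀ x ∈ F, g • x ∈ V := by
  classical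
  revert hF
  induction F using Finset.induction_on with
  | empty =>
    intro _
    exact ⟨hne.choose, hne.choose_spec,
      fun V _ _ => ⟨1, fun w _ => one_smul G w, by simp⟩⟩
  | @insert a F' ha IH =>
    intro hF
    have hF' : ↑F' ⊆ α := fun x hx => hF (Finset.mem_insert.mpr (Or.inr hx))
    have haα : a ∈ α := hF (Finset.mem_insert_self a F')
    obtain ⟨z', hz', H1⟩ := IH hF'
    -- step (i): a cluster point w for the images of a
    have claim : ∃ w ∈ α, ∀ V W : Set X, IsOpen V → z' ∈ V → IsOpen W → w ∈ W →
        ∃ g : G, (∀ u ∉ α, g • u = u) ∧ (∀ x ∈ F', g • x ∈ V) ∧ g • a ∈ W := by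
      by_contra hcon
      push_neg at hcon
      -- for each w ∈ α get bad nbhds
      have hbad : ∀ w : α, ∃ V W : Set X, IsOpen V ∧ z' ∈ V ∧ IsOpen W ∧ (w : X) ∈ W ∧
          ∀ g : G, (∀ u ∉ α, g • u = u) → (∀ x ∈ F', g • x ∈ V) → g • a ∉ W := by
        intro w
        obtain ⟨V, W, hVo, hzV, hWo, hwW, hng⟩ := hcon w w.2
        exact ⟨V, W, hVo, hzV, hWo, hwW, hng⟩
      choose V W hVo hzV hWo hwW hng using hbad
      obtain ⟨t, hcov⟩ := hc.elim_finite_subcover W hWo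
        (fun x hx => Set.mem_iUnion.mpr ⟨⟨x, hx⟩, hwW ⟨x, hx⟩⟩)
      have hVs : IsOpen (⋂ i ∈ t, V i) := isOpen_biInter_finset (fun i _ => hVo i)
      have hzVs : z' ∈ ⋂ i ∈ t, V i := Set.mem_iInter₂.mpr (fun i _ => hzV i)
      obtain ⟨g, hg, hgF⟩ := H1 _ hVs hzVs
      have hga : g • a ∈ α := rig_mem hg haα
      obtain ⟨i, hit, hgi⟩ := Set.mem_iUnion₂.mp (hcov hga)
      exact hng i g hg (fun x hx => Set.mem_iInter₂.mp (hgF x hx) i hit) hgi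
    obtain ⟨w, hw, hQ⟩ := claim
    -- step (ii): proximality of the pair (z', w)
    obtain ⟨u, hu⟩ := hprox α hc ho hne z' hz' w hw
    have huα : u ∈ α := by
      have hsub : {p : X × X | ∃ g : G, (∀ v ∉ α, g • v = v) ∧ p = (g • z', g • w)} ⊆
          α ×ˢ α := by
        rintro p ⟨g, hg, rfl⟩
        exact ⟨rig_mem hg hz', rig_mem hg hw⟩
      have := closure_minimal hsub ((hc.isClosed).prod (hc.isClosed)) hu
      exact this.1
    refine ⟨u, huα, ?_⟩
    intro V hVo huV
    obtain ⟨p, hpV, g', hg', hp⟩ := mem_closure_iff.mp hu (V ×ˢ V) (hVo.prod hVo) (Set.mem_prod.mpr ⟨huV, huV⟩)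
    subst hp
    have hpz : g' • z' ∈ V := hpV.1
    have hpw : g' • w ∈ V := hpV.2
    have hco : Continuous fun x : X => g' • x := continuous_const_smul g'
    have hV'o : IsOpen ((fun x : X => g' • x) ⁻¹' V) := hco.isOpen_preimage V hVo
    obtain ⟨g, hg, hgF, hga⟩ := hQ _ _ hV'o hpz hV'o hpw
    refine ⟨g' * g, rig_mul hg' hg, ?_⟩
    intro x hx
    rcases Finset.mem_insert.mp hx with rfl | hx'
    · rw [mul_smul]; exact hga
    · rw [mul_smul]; exact hgF x hx'

/-- exact movement of a finite subset into any open set meeting α -/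
theorem move_into_aux
    (hmin : ∀ α : Set X, IsCompact α → IsOpen α → α.Nonempty →
      ∀ x ∈ α, ∀ y ∈ α, y ∈ closure {z : X | ∃ g : G, (∀ w ∉ α, g • w = w) ∧ g • x = z})
    (hprox : ∀ α : Set X, IsCompact α → IsOpen α → α.Nonempty →
      ∀ x ∈ α, ∀ y ∈ α, ∃ z : X, (z, z) ∈
        closure {p : X × X | ∃ g : G, (∀ w ∉ α, g • w = w) ∧ p = (g • x, g • y)})
    (α : Set X) (hc : IsCompact α) (ho : IsOpen α) (hne : α.Nonempty)
    (F : Finset X) (hF : ↑F ⊆ α) (U : Set X) (hUo : IsOpen U) (hUα : (U ∩ α).Nonempty) :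
    ∃ g : G, (∀ w ∉ α, g • w = w) ∧ ∀ x ∈ F, g • x ∈ U ∩ α := by
  obtain ⟨z, hz, hQ⟩ := contract_aux hprox α hc ho hne F hF
  obtain ⟨y, hyU, hyα⟩ := hUα
  have hminz := hmin α hc ho hne z hz y hyα
  obtain ⟨t, htUα, g', hg', hgz⟩ := mem_closure_iff.mp hminz (U ∩ α)
    (hUo.inter ho) ⟨hyU, hyα⟩
  have hco : Continuous fun x : X => g' • x := continuous_const_smul g'
  have hV'o : IsOpen ((fun x : X => g' • x) ⁻¹' (U ∩ α)) :=
    hco.isOpen_preimage _ (hUo.inter ho)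
  have hzV' : z ∈ (fun x : X => g' • x) ⁻¹' (U ∩ α) := by
    show g' • z ∈ U ∩ α
    rw [hgz]; exact htUα
  obtain ⟨g, hg, hgF⟩ := hQ _ hV'o hzV'
  refine ⟨g' * g, rig_mul hg' hg, fun x hx => ?_⟩
  rw [mul_smul]
  exact hgF x hx

end AuxAct
section AuxMain

variable {G X : Type*} [Group G] [TopologicalSpace G] [TopologicalSpace X]
  [LocallyCompactSpace X] [T2Space X] [TotallyDisconnectedSpace X]
  [MulAction G X] [ContinuousSMul G X]

/-- if `X` is nontrivial then it has no isolated points -/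
theorem not_isOpen_singleton_aux
    (hmin : ∀ α : Set X, IsCompact α → IsOpen α → α.Nonempty →
      ∀ x ∈ α, ∀ y ∈ α, y ∈ closure {z : X | ∃ g : G, (∀ w ∉ α, g • w = w) ∧ g • x = z})
    (hprox : ∀ α : Set X, IsCompact α → IsOpen α → α.Nonempty →
      ∀ x ∈ α, ∀ y ∈ α, ∃ z : X, (z, z) ∈
        closure {p : X × X | ∃ g : G, (∀ w ∉ α, g • w = w) ∧ p = (g • x, g • y)})
    (hnt : Nontrivial X) (a : X) : ¬ IsOpen ({a} : Set X) := by
  intro hopen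
  obtain ⟨b, hb⟩ := exists_ne a
  obtain ⟨K, hKc, hKo, hbK, _⟩ := cpo_aux (isOpen_univ : IsOpen (Set.univ : Set X))
    (Set.mem_univ b)
  set α : Set X := {a} ∪ K with hα
  have hαc : IsCompact α := isCompact_singleton.union hKc
  have hαo : IsOpen α := hopen.union hKo
  have haα : a ∈ α := Or.inl rfl
  have hbα : b ∈ α := Or.inr hbK
  have hmin' := hmin α hαc hαo ⟨a, haα⟩ b hbα a haα
  obtain ⟨t, hta, g, hg, hgb⟩ := mem_closure_iff.mp hmin' {a} hopen rfl
  have hga : g • b = a := by rw [hgb]; exact hta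
  -- b is also isolated
  have hbop : IsOpen ({b} : Set X) := by
    have hpre : (fun x : X => g • x) ⁻¹' {a} = {b} := by
      ext x
      simp only [Set.mem_preimage, Set.mem_singleton_iff]
      constructor
      · intro h; have := h.trans hga.symm; exact smul_left_cancel g this
      · rintro rfl; exact hga
    rw [← hpre]
    exact (continuous_const_smul g).isOpen_preimage _ hopen
  -- now use proximality on the two point set {a, b}
  have h2c : IsCompact ({a, b} : Set X) := (Set.toFinite _).isCompact
  have h2o : IsOpen ({a, b} : Set X) := by
    rw [Set.insert_eq]
    exact hopen.union hbop
  obtain ⟨u, hu⟩ := hprox {a, b} h2c h2o ⟨a, Or.inl rfl⟩ a (Or.inl rfl) b (Or.inr rfl)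
  have hsub : {p : X × X | ∃ g : G, (∀ w ∉ ({a, b} : Set X), g • w = w) ∧
      p = (g • a, g • b)} ⊆ {((a : X), b), (b, a)} := by
    rintro p ⟨k, hk, rfl⟩
    have h1 : k • a ∈ ({a, b} : Set X) := rig_mem hk (Or.inl rfl)
    have h2 : k • b ∈ ({a, b} : Set X) := rig_mem hk (Or.inr rfl)
    have hne : k • a ≠ k • b := fun h => hb.symm (smul_left_cancel k h)
    rcases h1 with h1 | h1 <;> rcases h2 with h2 | h2
    · exact absurd (h1.trans h2.symm) hne
    · rw [Set.mem_singleton_iff] at h2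
      exact Or.inl (by rw [h1, h2])
    · rw [Set.mem_singleton_iff] at h1
      exact Or.inr (by rw [h1, h2]; rfl)
    · rw [Set.mem_singleton_iff] at h1 h2
      exact absurd (h1.trans h2.symm) hne
  have hfin : IsClosed ({((a : X), b), (b, a)} : Set (X × X)) := (Set.toFinite _).isClosed
  have := closure_minimal hsub hfin hu
  rcases this with h | h
  · have h1 : u = a := congrArg Prod.fst h
    have h2 : u = b := congrArg Prod.snd h
    exact hb (h2.symm.trans h1)
  · rw [Set.mem_singleton_iff] at h
    have h1 : u = b := congrArg Prod.fst h
    have h2 : u = a := congrArg Prod.snd h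
    exact hb (h1.symm.trans h2)

end AuxMain

section AuxCover

variable {G X : Type*} [Group G] [TopologicalSpace G] [TopologicalSpace X]
  [LocallyCompactSpace X] [T2Space X] [TotallyDisconnectedSpace X]
  [MulAction G X] [ContinuousSMul G X] [FaithfulSMul G X]

theorem cover_exists_aux (P : Set G) (hP : IsCompact P) (h1 : (1 : G) ∉ P) :
    ∃ (n : ℕ) (W B : Fin n → Set X),
      (∀ i, IsCompact (W i) ∧ IsOpen (W i) ∧ (W i).Nonempty ∧ W i ∩ B i = ∅) ∧
      ∀ p ∈ P, ∃ i, ∀ x ∈ W i, p • x ∈ B i := by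
  have key : ∀ p : {g : G // g ∈ P}, ∃ (N : Set G) (Wp Bp : Set X), IsOpen N ∧ ↑p ∈ N ∧
      IsCompact Wp ∧ IsOpen Wp ∧ Wp.Nonempty ∧ Wp ∩ Bp = ∅ ∧
      ∀ q ∈ N, ∀ x ∈ Wp, q • x ∈ Bp := by
    rintro ⟨p, hp⟩
    have hp1 : p ≠ 1 := fun h => h1 (h ▸ hp)
    have hmoved : ∃ x : X, p • x ≠ x := by
      by_contra hcon
      push_neg at hcon
      exact hp1 (FaithfulSMul.eq_of_smul_eq_smul (fun x : X => by rw [hcon x, one_smul]))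
    obtain ⟨x, hx⟩ := hmoved
    obtain ⟨Bo, A, hBo, hAo, hpxB, hxA, hdisj⟩ := t2_separation hx
    have hcont : Continuous fun q : G × X => q.1 • q.2 := continuous_smul
    have hpre : IsOpen ((fun q : G × X => q.1 • q.2) ⁻¹' Bo) := hcont.isOpen_preimage _ hBo
    obtain ⟨N, v, hNo, hvo, hpN, hxv, hsub⟩ := isOpen_prod_iff.mp hpre p x hpxB
    obtain ⟨W, hWc, hWo, hxW, hWsub⟩ := cpo_aux (hAo.inter hvo) ⟨hxA, hxv⟩
    refine ⟨N, W, Bo, hNo, hpN, hWc, hWo, ⟨x, hxW⟩, ?_, ?_⟩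
    · apply Set.eq_empty_iff_forall_notMem.mpr
      rintro y ⟨hyW, hyB⟩
      exact Set.disjoint_left.mp hdisj hyB ((hWsub hyW).1)
    · intro q hq y hy
      exact hsub (Set.mk_mem_prod hq (hWsub hy).2)
  choose N Wp Bp hNo hpN hWc hWo hWne hWB hNact using key
  obtain ⟨t, hcov⟩ := hP.elim_nhds_subcover' (fun p hp => N ⟨p, hp⟩)
    (fun p hp => (hNo ⟨p, hp⟩).mem_nhds (hpN ⟨p, hp⟩))
  refine ⟨t.card, fun i => Wp (t.equivFin.symm i).1,
    fun i => Bp (t.equivFin.symm i).1, ?_, ?_⟩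
  · intro i
    exact ⟨hWc _, hWo _, hWne _, hWB _⟩
  · intro p hp
    obtain ⟨q, hqt, hpq⟩ := Set.mem_iUnion₂.mp (hcov hp)
    refine ⟨t.equivFin ⟨q, hqt⟩, ?_⟩
    intro x hxW
    simp only [Equiv.symm_apply_apply] at hxW ⊢
    exact hNact q p hpq x hxW

end AuxCover

section AuxOrb

variable {G X : Type*} [Group G] [MulAction G X]

/-- orbit of a point under a subgroup, in set-builder form -/
theorem orb_eq_aux (H : Subgroup G) {x z : X} (hz : z ∈ {y : X | ∃ h ∈ H, h • x = y}) :
    {y : X | ∃ h ∈ H, h • z = y} = {y : X | ∃ h ∈ H, h • x = y} := by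
  obtain ⟨h, hh, rfl⟩ := hz
  ext y
  constructor
  · rintro ⟨k, hk, rfl⟩
    exact ⟨k * h, H.mul_mem hk hh, (mul_smul k h x)⟩
  · rintro ⟨k, hk, rfl⟩
    refine ⟨k * h⁻¹, H.mul_mem hk (H.inv_mem hh), ?_⟩
    rw [mul_smul, inv_smul_smul]

theorem orb_disjoint_aux (H : Subgroup G) {x x' : X}
    (hne : {y : X | ∃ h ∈ H, h • x = y} ≠ {y : X | ∃ h ∈ H, h • x' = y}) :
    Disjoint {y : X | ∃ h ∈ H, h • x = y} {y : X | ∃ h ∈ H, h • x' = y} := by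
  rw [Set.disjoint_left]
  intro z hz hz'
  exact hne ((orb_eq_aux H hz).symm.trans (orb_eq_aux H hz'))

theorem orb_self_aux (H : Subgroup G) (x : X) : x ∈ {y : X | ∃ h ∈ H, h • x = y} :=
  ⟨1, H.one_mem, one_smul G x⟩

theorem orb_smul_aux (H : Subgroup G) {x y : X} {h : G} (hh : h ∈ H)
    (hy : y ∈ {y : X | ∃ h ∈ H, h • x = y}) : h • y ∈ {y : X | ∃ h ∈ H, h • x = y} := by
  obtain ⟨k, hk, rfl⟩ := hy
  exact ⟨h * k, H.mul_mem hh hk, mul_smul h k x⟩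

end AuxOrb

theorem extract_aux {α : Type*} {s t : Set α} (hts : t ⊆ s) (htf : t.Finite) {n : ℕ}
    (hc : t.ncard = n) : ∃ f : Fin n → α, Function.Injective f ∧ ∀ i, f i ∈ s := by
  have hcard : htf.toFinset.card = n := by
    rw [← Set.ncard_eq_toFinset_card t htf]; exact hc
  set e := (Finset.equivFinOfCardEq hcard).symm
  refine ⟨fun i => (e i).1, ?_, ?_⟩
  · intro i j hij
    have : e i = e j := Subtype.ext hij
    exact e.injective this
  · intro i
    exact hts (htf.mem_toFinset.mp (e i).2)
/-- Let `G` be a locally compact Hausdorff group and `X` a totally disconnected locally compact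
Hausdorff space with a continuous, faithful `G`-action such that for every non-empty compact
open `α ⊆ X` the induced action of the rigid stabilizer `R_G(α) = {g | ∀ w ∉ α, g • w = w}`
on `α` is minimal and proximal. Then for every compact `P ⊆ G` with `1 ∉ P` there is an
integer `r ≥ 1` such that every closed subgroup `H` of `G` all of whose conjugates meet `P`
has at most `r` finite orbits in `X`. -/
theorem finitely_many_finite_orbits_of_confining_set
    {G X : Type*} [Group G] [TopologicalSpace G] [IsTopologicalGroup G]
    [LocallyCompactSpace G] [T2Space G]
    [TopologicalSpace X] [LocallyCompactSpace X] [T2Space X] [TotallyDisconnectedSpace X]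
    [MulAction G X] [ContinuousSMul G X] [FaithfulSMul G X]
    (hmin : ∀ α : Set X, IsCompact α → IsOpen α → α.Nonempty →
      ∀ x ∈ α, ∀ y ∈ α, y ∈ closure {z : X | ∃ g : G, (∀ w ∉ α, g • w = w) ∧ g • x = z})
    (hprox : ∀ α : Set X, IsCompact α → IsOpen α → α.Nonempty →
      ∀ x ∈ α, ∀ y ∈ α, ∃ z : X, (z, z) ∈
        closure {p : X × X | ∃ g : G, (∀ w ∉ α, g • w = w) ∧ p = (g • x, g • y)})
    (P : Set G) (hP : IsCompact P) (h1 : (1 : G) ∉ P) :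
    ∃ r : ℕ, 1 ≤ r ∧ ∀ H : Subgroup G, IsClosed (H : Set G) →
      (∀ g : G, ∃ h ∈ H, g * h * g⁻¹ ∈ P) →
      {O : Set X | (∃ x : X, O = {y : X | ∃ h ∈ H, h • x = y}) ∧ O.Finite}.Finite ∧
      {O : Set X | (∃ x : X, O = {y : X | ∃ h ∈ H, h • x = y}) ∧ O.Finite}.ncard ≤ r := by
  rcases subsingleton_or_nontrivial X with hX | hX
  · -- degenerate case : `X` has at most one point, so `G` is trivial and no `H` is confined
    refine ⟨1, le_rfl, fun H _ hconf => ?_⟩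
    exfalso
    obtain ⟨h, _, hPh⟩ := hconf 1
    have hh1 : h = 1 := FaithfulSMul.eq_of_smul_eq_smul (fun x : X => Subsingleton.elim _ _)
    rw [hh1] at hPh
    simp only [one_mul, inv_one, mul_one] at hPh
    exact h1 hPh
  · -- main case : `X` is nontrivial, hence has no isolated points
    have hperf : ∀ a : X, ¬ IsOpen ({a} : Set X) := not_isOpen_singleton_aux hmin hprox hX
    obtain ⟨n, W, B, hWp, hcov⟩ := cover_exists_aux (X := X) P hP h1
    refine ⟨n + 1, Nat.le_add_left 1 n, fun H _ hconf => ?_⟩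
    set 𝒪 := {O : Set X | (∃ x : X, O = {y : X | ∃ h ∈ H, h • x = y}) ∧ O.Finite} with h𝒪
    -- key claim : there do not exist `n` distinct finite orbits
    have key : ∀ Y : Fin n → Set X, Function.Injective Y → (∀ i, Y i ∈ 𝒪) → False := by
      intro Y hYinj hYmem
      have hYx : ∀ i, ∃ x : X, Y i = {y : X | ∃ h ∈ H, h • x = y} := fun i => (hYmem i).1
      choose xs hxs using hYx
      have hYfin : ∀ i, (Y i).Finite := fun i => (hYmem i).2
      have hYne : ∀ i, (Y i).Nonempty := fun i => ⟨xs i, (hxs i) ▸ orb_self_aux H (xs i)⟩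
      have hYH : ∀ i, ∀ h ∈ H, ∀ y ∈ Y i, h • y ∈ Y i := by
        intro i h hh y hy
        rw [hxs i] at hy ⊢
        exact orb_smul_aux H hh hy
      have hYd : Pairwise fun i j => Disjoint (Y i) (Y j) := by
        intro i j hij
        rw [hxs i, hxs j]
        apply orb_disjoint_aux
        rw [← hxs i, ← hxs j]
        exact fun h => hij (hYinj h)
      -- disjointify the covering sets together with an extra free region `D`
      obtain ⟨C, hC, hCd⟩ := disjointify_aux hperf (n + 1)
        (Fin.snoc (fun i => W i) Set.univ)
        (fun i => by
          refine Fin.lastCases ?_ ?_ i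
          · rw [Fin.snoc_last]; exact isOpen_univ
          · intro j; rw [Fin.snoc_castSucc]; exact (hWp j).2.1)
        (fun i => by
          refine Fin.lastCases ?_ ?_ i
          · rw [Fin.snoc_last]; exact Set.univ_nonempty
          · intro j; rw [Fin.snoc_castSucc]; exact (hWp j).2.2.1)
      set D := C (Fin.last n) with hD
      have hCW : ∀ j : Fin n, C j.castSucc ⊆ W j := by
        intro j
        have := (hC j.castSucc).2.2.2
        rwa [Fin.snoc_castSucc] at this
      have hDc : IsCompact D := (hC _).1
      have hDo : IsOpen D := (hC _).2.1
      have hDne : D.Nonempty := (hC _).2.2.1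
      -- a big compact open set `A` containing everything relevant
      have hYUfin : (⋃ i, Y i).Finite := Set.finite_iUnion hYfin
      obtain ⟨K0, hK0c, hK0o, hYK0, _⟩ := fin_cover_aux hYUfin isOpen_univ (Set.subset_univ _)
      set A := (K0 ∪ D) ∪ ⋃ j : Fin n, C j.castSucc with hA
      have hAc : IsCompact A := (hK0c.union hDc).union (isCompact_iUnion (fun j => (hC _).1))
      have hAo : IsOpen A := (hK0o.union hDo).union (isOpen_iUnion (fun j => (hC _).2.1))
      have hDA : D ⊆ A := fun x hx => Or.inl (Or.inr hx)
      have hAne : A.Nonempty := hDne.mono hDA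
      -- contract the union of the orbits into `D`
      have hFA : ↑hYUfin.toFinset ⊆ A := by
        rw [Set.Finite.coe_toFinset]
        exact fun x hx => Or.inl (Or.inl (hYK0 hx))
      have hDAne : (D ∩ A).Nonempty := by
        obtain ⟨d, hd⟩ := hDne
        exact ⟨d, hd, hDA hd⟩
      obtain ⟨g0, hg0rig, hg0⟩ := move_into_aux hmin hprox A hAc hAo hAne
        hYUfin.toFinset hFA D hDo hDAne
      set S : Fin n → Set X := fun i => (fun y => g0 • y) '' Y i with hS
      have hSfin : ∀ i, (S i).Finite := fun i => (hYfin i).image _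
      have hSD : ∀ i, S i ⊆ D := by
        rintro i z ⟨y, hy, rfl⟩
        exact (hg0 y (hYUfin.mem_toFinset.mpr (Set.mem_iUnion.mpr ⟨i, hy⟩))).1
      have hSd : Pairwise fun i j => Disjoint (S i) (S j) := by
        intro i j hij
        rw [Set.disjoint_left]
        rintro z ⟨y, hy, rfl⟩ ⟨y', hy', he⟩
        have hyy : y' = y := MulAction.injective g0 he
        exact Set.disjoint_left.mp (hYd hij) hy (hyy ▸ hy')
      -- separate the contracted orbits inside `D`
      obtain ⟨E, hE, hEd⟩ := sep_fin_aux n S hSfin hSd hDo hSD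
      set β : Fin n → Set X := fun i => E i ∪ C i.castSucc with hβ
      have hβc : ∀ i, IsCompact (β i) := fun i => (hE i).1.union (hC _).1
      have hβo : ∀ i, IsOpen (β i) := fun i => (hE i).2.1.union (hC _).2.1
      have hβne : ∀ i, (β i).Nonempty :=
        fun i => Set.Nonempty.mono subset_union_right (hC i.castSucc).2.2.1
      have hβd : Pairwise fun i j => Disjoint (β i) (β j) := by
        intro i j hij
        have hcc : Disjoint (C i.castSucc) (C j.castSucc) :=
          hCd (fun h => hij (Fin.castSucc_injective n h))
        have hDCj : Disjoint D (C j.castSucc) := hCd (Fin.castSucc_lt_last j).ne'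
        have hDCi : Disjoint D (C i.castSucc) := hCd (Fin.castSucc_lt_last i).ne'
        apply Set.disjoint_union_left.mpr
        constructor
        · apply Set.disjoint_union_right.mpr
          exact ⟨hEd hij, hDCj.mono_left (hE i).2.2.2⟩
        · apply Set.disjoint_union_right.mpr
          exact ⟨(hDCi.mono_left (hE j).2.2.2).symm, hcc⟩
      -- move each contracted orbit into its own covering set
      have hSβ : ∀ i, ↑(hSfin i).toFinset ⊆ β i := fun i => by
        rw [Set.Finite.coe_toFinset]
        exact ((hE i).2.2.1).trans Set.subset_union_left
      have hCβne : ∀ i, (C i.castSucc ∩ β i).Nonempty := by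
        intro i
        obtain ⟨c, hc⟩ := (hC i.castSucc).2.2.1
        exact ⟨c, hc, Or.inr hc⟩
      choose cc hccrig hccmap using fun i => move_into_aux hmin hprox (β i) (hβc i) (hβo i)
        (hβne i) (hSfin i).toFinset (hSβ i) (C i.castSucc) (hC _).2.1 (hCβne i)
      set g1 := ((List.finRange n).map cc).prod with hg1
      set g := g1 * g0 with hg
      have hmap : ∀ i, ∀ y ∈ Y i, g • y ∈ C i.castSucc := by
        intro i y hy
        have hs : g0 • y ∈ S i := Set.mem_image_of_mem _ hy
        have hsβ : g0 • y ∈ β i := Or.inl ((hE i).2.2.1 hs)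
        have hprodeq : g1 • (g0 • y) = cc i • (g0 • y) :=
          list_prod_smul_eq β hβd cc hccrig (List.finRange n) (List.nodup_finRange n) i
            (List.mem_finRange i) _ hsβ
        rw [hg, mul_smul, hprodeq]
        exact (hccmap i _ ((hSfin i).mem_toFinset.mpr hs)).1
      -- the contradiction with the confining property
      obtain ⟨h, hh, hPc⟩ := hconf g
      obtain ⟨i, hi⟩ := hcov _ hPc
      obtain ⟨y0, hy0⟩ := hYne i
      have hx : g • y0 ∈ W i := hCW i (hmap i y0 hy0)
      have h2 := hi (g • y0) hx
      have h3 : (g * h * g⁻¹) • (g • y0) = g • (h • y0) := by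
        rw [mul_smul, mul_smul, inv_smul_smul]
      rw [h3] at h2
      have h4 : g • (h • y0) ∈ W i := hCW i (hmap i _ (hYH i h hh y0 hy0))
      exact Set.eq_empty_iff_forall_notMem.mp (hWp i).2.2.2 _ ⟨h4, h2⟩
    have hfin : 𝒪.Finite := by
      by_contra hinf
      obtain ⟨t, hts, htf, htc⟩ := Set.Infinite.exists_subset_ncard_eq hinf n
      obtain ⟨f, hfi, hfm⟩ := extract_aux hts htf htc
      exact key f hfi hfm
    refine ⟨hfin, ?_⟩
    by_contra hgt
    push_neg at hgt
    obtain ⟨t, hts, htc⟩ := Set.exists_subset_card_eq (show n ≤ 𝒪.ncard by omega)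
    obtain ⟨f, hfi, hfm⟩ := extract_aux hts (hfin.subset hts) htc
    exact key f hfi hfm
end

section
/- Let n be a positive integer and let A and B be subgroups of the symmetric group Sym({1,…,n}) such that Sym({1,…,n}) = AB, i.e. every permutation can be written as a product ab with a ∈ A and b ∈ B. If A is transitive and imprimitive on {1,…,n}, then B has at most two orbits on {1,…,n}, and some B-orbit has cardinality at least n − 1. -/
open scoped Classical

section Aux

variable {n : ℕ}

/-- `u` and `v` lie in a common `A`-translate of `Δ`. -/
private def sb (A : Subgroup (Equiv.Perm (Fin n))) (Δ : Finset (Fin n)) (u v : Fin n) : Prop :=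
  ∃ a ∈ A, u ∈ Δ.image ⇑a ∧ v ∈ Δ.image ⇑a

private lemma sb_symm {A : Subgroup (Equiv.Perm (Fin n))} {Δ : Finset (Fin n)} {u v : Fin n}
    (h : sb A Δ u v) : sb A Δ v u := by
  obtain ⟨a, ha, h1, h2⟩ := h; exact ⟨a, ha, h2, h1⟩

private lemma image_mul_image {Δ : Finset (Fin n)} (g c : Equiv.Perm (Fin n)) :
    (Δ.image ⇑c).image ⇑g = Δ.image ⇑(g * c) := by
  rw [Finset.image_image, ← Equiv.Perm.coe_mul]

private lemma mem_image_mul {Δ : Finset (Fin n)} {u : Fin n} {c : Equiv.Perm (Fin n)}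
    (g : Equiv.Perm (Fin n)) (h : u ∈ Δ.image ⇑c) : g u ∈ Δ.image ⇑(g * c) := by
  rw [← image_mul_image]
  exact Finset.mem_image_of_mem _ h

private lemma sb_conj {A : Subgroup (Equiv.Perm (Fin n))} {Δ : Finset (Fin n)}
    {a : Equiv.Perm (Fin n)} (ha : a ∈ A) (u v : Fin n) :
    sb A Δ (a u) (a v) ↔ sb A Δ u v := by
  constructor
  · rintro ⟨c, hc, hu, hv⟩
    refine ⟨a⁻¹ * c, mul_mem (inv_mem ha) hc, ?_, ?_⟩
    · have := mem_image_mul (Δ := Δ) a⁻¹ hu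
      simpa [mul_assoc] using this
    · have := mem_image_mul (Δ := Δ) a⁻¹ hv
      simpa [mul_assoc] using this
  · rintro ⟨c, hc, hu, hv⟩
    exact ⟨a * c, mul_mem ha hc, mem_image_mul a hu, mem_image_mul a hv⟩

/-- number of ordered pairs of distinct points of `S` in a common block -/
private noncomputable def cnt (A : Subgroup (Equiv.Perm (Fin n))) (Δ : Finset (Fin n))
    (S : Finset (Fin n)) : ℕ :=
  ∑ x ∈ S, (S.filter fun y => y ≠ x ∧ sb A Δ x y).card

private lemma cnt_image {A : Subgroup (Equiv.Perm (Fin n))} {Δ : Finset (Fin n)}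
    {a : Equiv.Perm (Fin n)} (ha : a ∈ A) (S : Finset (Fin n)) :
    cnt A Δ (S.image ⇑a) = cnt A Δ S := by
  unfold cnt
  rw [Finset.sum_image (fun x _ y _ h => a.injective h)]
  refine Finset.sum_congr rfl fun x hx => ?_
  rw [Finset.filter_image, Finset.card_image_of_injective _ a.injective]
  congr 1
  apply Finset.filter_congr
  intro y hy
  rw [sb_conj ha]
  simp [a.injective.ne_iff]

private lemma cnt_insert {A : Subgroup (Equiv.Perm (Fin n))} {Δ : Finset (Fin n)}
    {x : Fin n} {T : Finset (Fin n)} (hx : x ∉ T) :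
    cnt A Δ (insert x T) = cnt A Δ T + 2 * (T.filter (sb A Δ x)).card := by
  unfold cnt
  rw [Finset.sum_insert hx]
  have h1 : ((insert x T).filter fun y => y ≠ x ∧ sb A Δ x y).card
      = (T.filter (sb A Δ x)).card := by
    rw [Finset.filter_insert]
    rw [if_neg (by simp)]
    congr 1
    apply Finset.filter_congr
    intro y hy
    have : y ≠ x := fun h => hx (h ▸ hy)
    simp [this]
  have h2 : ∀ w ∈ T, ((insert x T).filter fun y => y ≠ w ∧ sb A Δ w y).card
      = (T.filter fun y => y ≠ w ∧ sb A Δ w y).card + (if sb A Δ x w then 1 else 0) := by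
    intro w hw
    rw [Finset.filter_insert]
    by_cases h : x ≠ w ∧ sb A Δ w x
    · rw [if_pos h, Finset.card_insert_of_notMem (fun hc => hx (Finset.mem_of_mem_filter _ hc)),
        if_pos (sb_symm h.2)]
    · rw [if_neg h]
      have hxw : x ≠ w := fun hh => hx (hh ▸ hw)
      have : ¬ sb A Δ x w := fun hs => h ⟨hxw, sb_symm hs⟩
      rw [if_neg this]
      omega
  rw [Finset.sum_congr rfl h2, Finset.sum_add_distrib, Finset.sum_boole]
  push_cast
  rw [h1]
  have h3 : (T.filter fun w => sb A Δ x w) = T.filter (sb A Δ x) := rfl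
  rw [h3]
  omega

/-- a permutation carrying one finset onto another of the same size -/
private lemma exists_perm_image {α : Type*} [Fintype α] [DecidableEq α] (S T : Finset α)
    (h : S.card = T.card) : ∃ σ : Equiv.Perm α, S.image ⇑σ = T := by
  have hc : Sᶜ.card = Tᶜ.card := by
    rw [Finset.card_compl, Finset.card_compl, h]
  let e : {x // x ∈ S} ≃ {x // x ∈ T} := Finset.equivOfCardEq h
  let f' : {x // x ∈ Sᶜ} ≃ {x // x ∈ Tᶜ} := Finset.equivOfCardEq hc
  let f : {x // ¬ x ∈ S} ≃ {x // ¬ x ∈ T} :=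
    ((Equiv.subtypeEquivRight (fun x => (Finset.mem_compl (s := S)).symm)).trans f').trans
      (Equiv.subtypeEquivRight (fun x => Finset.mem_compl (s := T)))
  refine ⟨Equiv.subtypeCongr e f, ?_⟩
  have hsub : S.image ⇑(Equiv.subtypeCongr e f) ⊆ T := by
    intro z hz
    obtain ⟨w, hw, rfl⟩ := Finset.mem_image.mp hz
    have : Equiv.subtypeCongr e f w = (e ⟨w, hw⟩ : α) := by
      simp [Equiv.subtypeCongr, hw]
    rw [this]
    exact (e ⟨w, hw⟩).2
  apply Finset.eq_of_subset_of_card_le hsub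
  rw [Finset.card_image_of_injective _ (Equiv.injective _), h]

end Aux

/-- If `Sym(n) = A * B` for subgroups `A, B` with `A` transitive and imprimitive, then `B` has
at most two orbits on `{1,…,n}`, one of which has cardinality at least `n - 1`. -/
theorem factorization_symmetric_group_orbits
    (n : ℕ) (hn : 0 < n)
    (A B : Subgroup (Equiv.Perm (Fin n)))
    (hAB : ∀ σ : Equiv.Perm (Fin n), ∃ a ∈ A, ∃ b ∈ B, σ = a * b)
    (htrans : ∀ x y : Fin n, ∃ a ∈ A, a x = y)
    (himprim : ∃ Δ : Finset (Fin n), 1 < Δ.card ∧ Δ.card < n ∧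
      ∀ a ∈ A, Δ.image (a : Fin n → Fin n) = Δ ∨ Disjoint (Δ.image (a : Fin n → Fin n)) Δ) :
    (∃ x y : Fin n, ∀ z : Fin n, (∃ b ∈ B, b x = z) ∨ (∃ b ∈ B, b y = z)) ∧
    (∃ x : Fin n, n - 1 ≤ {z : Fin n | ∃ b ∈ B, b x = z}.ncard) := by
  obtain ⟨Δ, hΔ1, hΔn, himp⟩ := himprim
  set d := Δ.card with hd
  -- orbit finsets
  let Ofin : Fin n → Finset (Fin n) := fun x => Finset.univ.filter (fun z => ∃ b ∈ B, b x = z)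
  have hOcard : ∀ x : Fin n, {z : Fin n | ∃ b ∈ B, b x = z}.ncard = (Ofin x).card := by
    intro x
    have : {z : Fin n | ∃ b ∈ B, b x = z} = ↑(Ofin x) := by
      ext z; simp [Ofin]
    rw [this, Set.ncard_coe_finset]
  -- two distinct elements of Δ and a point outside
  obtain ⟨δ₀, hδ₀, δ₁, hδ₁, hδne⟩ := Finset.one_lt_card.mp hΔ1
  have hcompl : (Δᶜ).Nonempty := by
    rw [← Finset.card_pos, Finset.card_compl]
    simp only [Fintype.card_fin]
    omega
  obtain ⟨p, hp⟩ := hcompl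
  have hpΔ : p ∉ Δ := Finset.mem_compl.mp hp
  -- block disjoint from Δ
  obtain ⟨a₀, ha₀, ha₀p⟩ := htrans δ₀ p
  set D₂ := Δ.image ⇑a₀ with hD₂
  have hdisj : Disjoint D₂ Δ := by
    rcases himp a₀ ha₀ with h | h
    · exfalso
      apply hpΔ
      rw [← h, ← ha₀p]
      exact Finset.mem_image_of_mem _ hδ₀
    · exact h
  have hD₂card : D₂.card = d := Finset.card_image_of_injective _ a₀.injective
  have h2d : 2 * d ≤ n := by
    have := Finset.card_union_of_disjoint hdisj ▸ Finset.card_le_univ (D₂ ∪ Δ)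
    simp only [Fintype.card_fin] at this
    omega
  -- sb membership characterizations
  have sb_left : ∀ u ∈ Δ, ∀ w, sb A Δ u w ↔ w ∈ Δ := by
    intro u hu w
    constructor
    · rintro ⟨a, ha, h1, h2⟩
      rcases himp a ha with h | h
      · exact h ▸ h2
      · exact absurd hu (Finset.disjoint_left.mp h h1)
    · intro hw
      exact ⟨1, one_mem A, by simpa using hu, by simpa using hw⟩
  have sb_right : ∀ v ∈ D₂, ∀ w, sb A Δ v w ↔ w ∈ D₂ := by
    intro v hv w
    constructor
    · rintro ⟨a, ha, h1, h2⟩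
      rcases himp (a₀⁻¹ * a) (mul_mem (inv_mem ha₀) ha) with h | h
      · have himg : Δ.image ⇑a = D₂ := by
          have := congrArg (fun s => Finset.image ⇑a₀ s) h
          rw [image_mul_image, mul_inv_cancel_left] at this
          rw [this, hD₂]
        exact himg ▸ h2
      · exfalso
        have hm1 : a₀⁻¹ v ∈ Δ.image ⇑(a₀⁻¹ * a) := mem_image_mul a₀⁻¹ h1
        have hm2 : a₀⁻¹ v ∈ Δ := by
          obtain ⟨δ, hδ, rfl⟩ := Finset.mem_image.mp hv
          simpa using hδ
        exact Finset.disjoint_left.mp h hm1 hm2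
    · intro hw
      exact ⟨a₀, ha₀, hv, hw⟩
  -- the main claim: some orbit is large
  have big : ∃ x : Fin n, n - 1 ≤ (Ofin x).card := by
    by_contra hsmall
    push_neg at hsmall
    by_cases hBtriv : ∀ x : Fin n, ∀ b ∈ B, (b : Equiv.Perm (Fin n)) x = x
    · -- B is trivial, so A = Sym, contradicting imprimitivity
      obtain ⟨a, ha, b, hb, hab⟩ := hAB (Equiv.swap δ₀ p)
      have hbone : b = 1 := Equiv.ext fun z => hBtriv z b hb
      rw [hbone, mul_one] at hab
      rw [← hab] at ha
      rcases himp _ ha with h | h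
      · apply hpΔ
        rw [← h]
        refine Finset.mem_image.mpr ⟨δ₀, hδ₀, ?_⟩
        simp
      · have hδ₁p : δ₁ ≠ p := fun hh => hpΔ (hh ▸ hδ₁)
        have : (Equiv.swap δ₀ p) δ₁ = δ₁ := Equiv.swap_apply_of_ne_of_ne (Ne.symm hδne) hδ₁p
        exact Finset.disjoint_left.mp h
          (Finset.mem_image.mpr ⟨δ₁, hδ₁, this⟩) hδ₁
    · push_neg at hBtriv
      obtain ⟨x, b₀, hb₀, hb₀x⟩ := hBtriv
      set O := Ofin x with hO
      have hxO : x ∈ O := by simp [hO, Ofin]; exact ⟨1, one_mem B, rfl⟩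
      have hbxO : b₀ x ∈ O := by simp [hO, Ofin]; exact ⟨b₀, hb₀, rfl⟩
      set r := O.card with hr
      have hr2 : 2 ≤ r := Finset.one_lt_card.mpr ⟨x, hxO, b₀ x, hbxO, fun h => hb₀x h.symm⟩
      have hrn : r ≤ n - 2 := by have h := hsmall x; rw [hr, hO]; omega
      have hn3 : 3 ≤ n := by omega
      -- orbit is B-invariant
      have horb : ∀ b ∈ B, O.image ⇑b = O := by
        intro b hb
        ext z
        simp only [Finset.mem_image, hO, Ofin, Finset.mem_filter, Finset.mem_univ, true_and]
        constructor
        · rintro ⟨w, ⟨c, hc, rfl⟩, rfl⟩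
          exact ⟨b * c, mul_mem hb hc, rfl⟩
        · rintro ⟨c, hc, rfl⟩
          exact ⟨(b⁻¹ * c) x, ⟨b⁻¹ * c, mul_mem (inv_mem hb) hc, rfl⟩, by simp⟩
      have cnt_const : ∀ σ : Equiv.Perm (Fin n), cnt A Δ (O.image ⇑σ) = cnt A Δ O := by
        intro σ
        obtain ⟨a, ha, b, hb, rfl⟩ := hAB σ
        rw [Equiv.Perm.coe_mul, ← Finset.image_image, horb b hb, cnt_image ha]
      -- construct the two test sets
      obtain ⟨T₁, hT₁sub, hT₁card⟩ := Finset.exists_subset_card_eq (s := Δ) (n := min r d) (min_le_right r d)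
      set w₁ := a₀ δ₀ with hw₁
      set w₂ := a₀ δ₁ with hw₂
      have hw₁D : w₁ ∈ D₂ := Finset.mem_image_of_mem _ hδ₀
      have hw₂D : w₂ ∈ D₂ := Finset.mem_image_of_mem _ hδ₁
      have hwne : w₁ ≠ w₂ := fun h => hδne (a₀.injective h)
      set W := Finset.univ \ (Δ ∪ {w₁, w₂}) with hW
      have hWcard : n - d - 2 ≤ W.card := by
        have h1 : (Δ ∪ {w₁, w₂}).card ≤ d + 2 := by
          calc (Δ ∪ {w₁, w₂}).card ≤ Δ.card + ({w₁, w₂} : Finset (Fin n)).card :=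
                Finset.card_union_le _ _
            _ ≤ d + 2 := by
                have : ({w₁, w₂} : Finset (Fin n)).card ≤ 2 := Finset.card_le_two
                omega
        have h2 : W.card = n - (Δ ∪ {w₁, w₂}).card := by
          rw [hW, Finset.card_sdiff_of_subset (Finset.subset_univ _)]
          simp
        omega
      obtain ⟨T₂, hT₂sub, hT₂card⟩ := Finset.exists_subset_card_eq (s := W) (n := r - min r d) (by omega)
      have hT₂Δ : ∀ z ∈ T₂, z ∉ Δ := by
        intro z hz
        have := hT₂sub hz
        rw [hW, Finset.mem_sdiff] at this
        intro hc; exact this.2 (Finset.mem_union_left _ hc)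
      have hT₂w : ∀ z ∈ T₂, z ≠ w₁ ∧ z ≠ w₂ := by
        intro z hz
        have := hT₂sub hz
        rw [hW, Finset.mem_sdiff] at this
        constructor <;> intro hc <;> exact this.2 (Finset.mem_union_right _ (by simp [hc]))
      set S₁ := T₁ ∪ T₂ with hS₁
      have hdisjT : Disjoint T₁ T₂ := by
        rw [Finset.disjoint_left]
        intro z hz1 hz2
        exact hT₂Δ z hz2 (hT₁sub hz1)
      have hS₁card : S₁.card = r := by
        rw [hS₁, Finset.card_union_of_disjoint hdisjT, hT₁card, hT₂card]
        omega
      obtain ⟨u, hu⟩ : T₁.Nonempty := by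
        rw [← Finset.card_pos, hT₁card]; omega
      have huΔ : u ∈ Δ := hT₁sub hu
      have huS : u ∈ S₁ := Finset.mem_union_left _ hu
      have hvS : w₁ ∉ S₁ := by
        rw [hS₁, Finset.mem_union]
        rintro (h | h)
        · exact Finset.disjoint_left.mp hdisj hw₁D (hT₁sub h)
        · exact (hT₂w _ h).1 rfl
      set T := S₁.erase u with hT
      have huT : u ∉ T := Finset.notMem_erase _ _
      have hvT : w₁ ∉ T := fun h => hvS (Finset.mem_of_mem_erase h)
      have hTcard : T.card = r - 1 := by rw [hT, Finset.card_erase_of_mem huS, hS₁card]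
      -- the two filter counts
      have he₁ : (T.filter (sb A Δ u)).card = min r d - 1 := by
        have : T.filter (sb A Δ u) = T₁.erase u := by
          ext z
          simp only [Finset.mem_filter, sb_left u huΔ z]
          constructor
          · rintro ⟨hzT, hzΔ⟩
            rw [Finset.mem_erase]
            refine ⟨Finset.ne_of_mem_erase hzT, ?_⟩
            rcases Finset.mem_union.mp (Finset.mem_of_mem_erase hzT) with h | h
            · exact h
            · exact absurd hzΔ (hT₂Δ z h)
          · intro hz
            rw [Finset.mem_erase] at hz
            exact ⟨Finset.mem_erase.mpr ⟨hz.1, Finset.mem_union_left _ hz.2⟩, hT₁sub hz.2⟩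
        rw [this, Finset.card_erase_of_mem hu, hT₁card]
      have he₂bound : (T.filter (sb A Δ w₁)).card ≤ d - 2 ∧
          (r ≤ d → (T.filter (sb A Δ w₁)).card = 0) := by
        have hsubd : T.filter (sb A Δ w₁) ⊆ (D₂.erase w₁).erase w₂ := by
          intro z hz
          rw [Finset.mem_filter, sb_right w₁ hw₁D z] at hz
          obtain ⟨hzT, hzD⟩ := hz
          have hzS : z ∈ S₁ := Finset.mem_of_mem_erase hzT
          have hzT₂ : z ∈ T₂ := by
            rcases Finset.mem_union.mp hzS with h | h
            · exact absurd (hT₁sub h) (Finset.disjoint_left.mp hdisj hzD)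
            · exact h
          rw [Finset.mem_erase, Finset.mem_erase]
          exact ⟨(hT₂w z hzT₂).2, (hT₂w z hzT₂).1, hzD⟩
        constructor
        · calc (T.filter (sb A Δ w₁)).card ≤ ((D₂.erase w₁).erase w₂).card :=
              Finset.card_le_card hsubd
            _ = d - 2 := by
              rw [Finset.card_erase_of_mem (Finset.mem_erase.mpr ⟨Ne.symm hwne, hw₂D⟩),
                Finset.card_erase_of_mem hw₁D, hD₂card]
              omega
        · intro hrd
          have hT₂empty : T₂ = ∅ := by
            rw [← Finset.card_eq_zero, hT₂card]
            omega
          have : T.filter (sb A Δ w₁) = ∅ := by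
            rw [Finset.eq_empty_iff_forall_notMem]
            intro z hz
            rw [Finset.mem_filter, sb_right w₁ hw₁D z] at hz
            obtain ⟨hzT, hzD⟩ := hz
            rcases Finset.mem_union.mp (Finset.mem_of_mem_erase hzT) with h | h
            · exact Finset.disjoint_left.mp hdisj hzD (hT₁sub h)
            · rw [hT₂empty] at h; simp at h
          rw [this]; simp
      -- cnt computations
      have hS₁eq : S₁ = insert u T := (Finset.insert_erase huS).symm
      have hcnt₁ : cnt A Δ S₁ = cnt A Δ T + 2 * (min r d - 1) := by
        rw [hS₁eq, cnt_insert huT, he₁]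
      have hcnt₂ : cnt A Δ (insert w₁ T) = cnt A Δ T + 2 * (T.filter (sb A Δ w₁)).card :=
        cnt_insert hvT
      -- both sets are images of O
      obtain ⟨σ₁, hσ₁⟩ := exists_perm_image O S₁ (by rw [hS₁card])
      obtain ⟨σ₂, hσ₂⟩ := exists_perm_image O (insert w₁ T) (by
        rw [Finset.card_insert_of_notMem hvT, hTcard]; omega)
      have hcc : cnt A Δ S₁ = cnt A Δ (insert w₁ T) := by
        rw [← hσ₁, ← hσ₂, cnt_const, cnt_const]
      rw [hcnt₁, hcnt₂] at hcc
      have heq : min r d - 1 = (T.filter (sb A Δ w₁)).card := by omega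
      rcases le_total r d with h | h
      · rw [min_eq_left h] at heq
        rw [he₂bound.2 h] at heq
        omega
      · rw [min_eq_right h] at heq
        have := he₂bound.1
        omega
  -- derive the two conclusions
  obtain ⟨x, hx⟩ := big
  have hx' : n - 1 ≤ {z : Fin n | ∃ b ∈ B, b x = z}.ncard := by rw [hOcard]; exact hx
  refine ⟨?_, ⟨x, hx'⟩⟩
  by_cases hall : ∀ z : Fin n, ∃ b ∈ B, (b : Equiv.Perm (Fin n)) x = z
  · exact ⟨x, x, fun z => Or.inl (hall z)⟩
  · push_neg at hall
    obtain ⟨y, hy⟩ := hall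
    refine ⟨x, y, fun z => ?_⟩
    by_cases hz : ∃ b ∈ B, (b : Equiv.Perm (Fin n)) x = z
    · exact Or.inl hz
    · right
      have hzy : z = y := by
        by_contra hne
        have hyO : y ∉ Ofin x := by
          simp only [Ofin, Finset.mem_filter, Finset.mem_univ, true_and]
          rintro ⟨b, hb, hbe⟩
          exact hy b hb hbe
        have hzO : z ∉ Ofin x := by
          simp only [Ofin, Finset.mem_filter, Finset.mem_univ, true_and]
          exact hz
        have hyi : y ∉ insert z (Ofin x) := by
          rw [Finset.mem_insert]
          rintro (h | h)
          · exact hne h.symm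
          · exact hyO h
        have hcard : (insert y (insert z (Ofin x))).card ≤ n := by
          have := Finset.card_le_univ (insert y (insert z (Ofin x)))
          simpa using this
        rw [Finset.card_insert_of_notMem hyi, Finset.card_insert_of_notMem hzO] at hcard
        omega
      exact ⟨1, one_mem B, by rw [hzy]; simp⟩
end

section
/- Let n and m be integers with 2 ≤ m and 2m ≤ n. If A is a transitive and imprimitive subgroup of the symmetric group Sym({1,…,n}), then the induced action of A on the collection of all m-element subsets of {1,…,n} is not transitive. -/
/-- A transitive, imprimitive subgroup of `Sym({1,…,n})` does not act transitively on the
`m`-element subsets of `{1,…,n}`, whenever `2 ≤ m` and `2m ≤ n`. -/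
theorem imprimitive_not_transitive_on_subsets
    (n m : ℕ) (hm : 2 ≤ m) (hmn : 2 * m ≤ n)
    (A : Subgroup (Equiv.Perm (Fin n)))
    (htrans : ∀ x y : Fin n, ∃ a ∈ A, a x = y)
    (himprim : ∃ Δ : Finset (Fin n), 1 < Δ.card ∧ Δ.card < n ∧
      ∀ a ∈ A, Δ.image (a : Fin n → Fin n) = Δ ∨ Disjoint (Δ.image (a : Fin n → Fin n)) Δ) :
    ¬ (∀ S T : Finset (Fin n), S.card = m → T.card = m →
        ∃ a ∈ A, S.image (a : Fin n → Fin n) = T) := by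
  classical
  intro h
  obtain ⟨Δ, hd1, hdn, hblock⟩ := himprim
  set d := Δ.card with hd
  -- images compose
  have himg : ∀ (a b : Equiv.Perm (Fin n)),
      Δ.image ((a * b : Equiv.Perm (Fin n)) : Fin n → Fin n)
        = (Δ.image (b : Fin n → Fin n)).image (a : Fin n → Fin n) := by
    intro a b
    rw [Finset.image_image]
    rfl
  -- translates are equal or disjoint
  have key : ∀ a ∈ A, ∀ b ∈ A,
      Δ.image (a : Fin n → Fin n) = Δ.image (b : Fin n → Fin n) ∨
      Disjoint (Δ.image (a : Fin n → Fin n)) (Δ.image (b : Fin n → Fin n)) := by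
    intro a ha b hb
    have hmem : b⁻¹ * a ∈ A := A.mul_mem (A.inv_mem hb) ha
    have himg2 : (Δ.image ((b⁻¹ * a : Equiv.Perm (Fin n)) : Fin n → Fin n)).image
        (b : Fin n → Fin n) = Δ.image (a : Fin n → Fin n) := by
      rw [Finset.image_image]
      have : (b : Fin n → Fin n) ∘ ((b⁻¹ * a : Equiv.Perm (Fin n)) : Fin n → Fin n)
          = (a : Fin n → Fin n) := by
        funext x; simp
      rw [this]
    rcases hblock (b⁻¹ * a) hmem with h1 | h1
    · left
      rw [← himg2, h1]
    · right
      rw [← himg2]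
      exact (Finset.disjoint_image (Equiv.injective b)).mpr h1
  -- every point is covered by a translate
  have hΔne : Δ.Nonempty := Finset.card_pos.mp (by omega)
  obtain ⟨y0, hy0⟩ := hΔne
  have cover : ∀ x : Fin n, ∃ a ∈ A, x ∈ Δ.image (a : Fin n → Fin n) := by
    intro x
    obtain ⟨a, ha, hax⟩ := htrans y0 x
    exact ⟨a, ha, Finset.mem_image.mpr ⟨y0, hy0, hax⟩⟩
  -- the block equivalence relation
  set r : Fin n → Fin n → Prop := fun x y =>
    ∃ a ∈ A, x ∈ Δ.image (a : Fin n → Fin n) ∧ y ∈ Δ.image (a : Fin n → Fin n) with hr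
  have rrefl : ∀ x, r x x := by
    intro x; obtain ⟨a, ha, hx⟩ := cover x; exact ⟨a, ha, hx, hx⟩
  have rsymm : ∀ {x y}, r x y → r y x := by
    rintro x y ⟨a, ha, hx, hy⟩; exact ⟨a, ha, hy, hx⟩
  have rtrans : ∀ {x y z}, r x y → r y z → r x z := by
    rintro x y z ⟨a, ha, hx, hy⟩ ⟨b, hb, hy', hz⟩
    rcases key a ha b hb with he | hdis
    · exact ⟨b, hb, he ▸ hx, hz⟩
    · exact absurd (Finset.disjoint_left.mp hdis hy) (fun hh => hh hy')
  set s : Setoid (Fin n) := ⟨r, ⟨rrefl, rsymm, rtrans⟩⟩ with hs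
  set π : Fin n → Quotient s := Quotient.mk s with hπ
  -- invariance of r under A
  have rinv : ∀ a ∈ A, ∀ x y, r x y → r (a x) (a y) := by
    rintro a ha x y ⟨b, hb, hx, hy⟩
    refine ⟨a * b, A.mul_mem ha hb, ?_, ?_⟩ <;>
      · rw [himg a b]
        exact Finset.mem_image_of_mem _ (by assumption)
  -- invariance of the block-count of a finset
  have νinv : ∀ a ∈ A, ∀ S : Finset (Fin n),
      ((S.image (a : Fin n → Fin n)).image π).card = (S.image π).card := by
    intro a ha S
    have hmap : ∀ x y, s.r x y → s.r (a x) (a y) := rinv a ha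
    set f : Quotient s → Quotient s := Quotient.map (a : Fin n → Fin n) hmap with hf
    have hfinj : Function.Injective f := by
      intro p q hpq
      induction p using Quotient.inductionOn with | h x =>
      induction q using Quotient.inductionOn with | h y =>
      have : s.r (a x) (a y) := Quotient.eq''.mp hpq
      refine Quotient.sound ?_
      have := rinv a⁻¹ (A.inv_mem ha) _ _ this
      have h' : r x y := by simpa using this
      exact h'
    have : (S.image (a : Fin n → Fin n)).image π = (S.image π).image f := by
      rw [Finset.image_image, Finset.image_image]
      rfl
    rw [this, Finset.card_image_of_injective _ hfinj]
  -- fibers of π are translates, so each has cardinality d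
  have fiber_card : ∀ b : Quotient s,
      (Finset.univ.filter (fun x => π x = b)).card = d := by
    intro b
    induction b using Quotient.inductionOn with | h x0 =>
    obtain ⟨a, ha, hx0⟩ := cover x0
    have : Finset.univ.filter (fun x => π x = Quotient.mk s x0)
        = Δ.image (a : Fin n → Fin n) := by
      ext y
      simp only [Finset.mem_filter, Finset.mem_univ, true_and, hπ]
      constructor
      · intro hy
        obtain ⟨b, hb, hyb, hx0b⟩ : r y x0 := Quotient.eq.mp hy
        rcases key b hb a ha with he | hdis
        · exact he ▸ hyb
        · exact absurd (Finset.disjoint_left.mp hdis hx0b) (fun hh => hh hx0)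
      · intro hy
        exact Quotient.sound ⟨a, ha, hy, hx0⟩
    rw [this, Finset.card_image_of_injective _ (Equiv.injective a)]
  set q := Fintype.card (Quotient s) with hq
  have hcount : q * d = n := by
    have h1 : (Finset.univ : Finset (Fin n)).card
        = ∑ b ∈ (Finset.univ : Finset (Quotient s)),
            (Finset.univ.filter (fun x => π x = b)).card :=
      Finset.card_eq_sum_card_fiberwise (fun x _ => Finset.mem_univ _)
    rw [Finset.sum_congr rfl (fun b _ => fiber_card b), Finset.sum_const, smul_eq_mul,
      Finset.card_univ, Finset.card_univ, Fintype.card_fin] at h1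
    exact h1.symm
  have hd2 : 2 ≤ d := hd1
  have hdpos : 0 < d := by omega
  have hq2 : 2 ≤ q := by
    rcases Nat.lt_or_ge q 2 with hlt | hge
    · interval_cases q <;> omega
    · exact hge
  have hdn2 : 2 * d ≤ n := by nlinarith
  -- the crucial numbers
  set c := (m - 1) / d + 1 with hc
  have hcd : m ≤ c * d := by
    have := Nat.lt_div_mul_add (a := m - 1) hdpos
    have : m - 1 < c * d := by rw [hc, Nat.add_mul, one_mul]; exact this
    omega
  have hcm : c < m := by
    have h1 : (m - 1) / d < m - 1 := by
      rw [Nat.div_lt_iff_lt_mul hdpos]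
      exact (lt_mul_iff_one_lt_right (by omega)).mpr hd1
    omega
  have hcdn : c * d < n := by
    have h1 : c * d ≤ (m - 1) + d := by
      rw [hc, Nat.add_mul, one_mul]
      have := Nat.div_mul_le_self (m - 1) d
      omega
    omega
  have hcq : c < q := by
    by_contra hcon
    push_neg at hcon
    have : q * d ≤ c * d := Nat.mul_le_mul_right d hcon
    omega
  -- Construct S : contained in c blocks
  obtain ⟨K, hKsub, hKcard⟩ := Finset.exists_subset_card_eq (s := (Finset.univ : Finset (Quotient s))) (n := c)
    (by simpa using hcq.le)
  have hUcard : (Finset.univ.filter (fun x => π x ∈ K)).card = c * d := by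
    have := Finset.card_eq_sum_card_fiberwise
      (f := π) (s := Finset.univ.filter (fun x => π x ∈ K)) (t := K)
      (fun x hx => (Finset.mem_filter.mp hx).2)
    rw [this]
    have heq : ∀ b ∈ K, ((Finset.univ.filter (fun x => π x ∈ K)).filter
        (fun x => π x = b)).card = d := by
      intro b hb
      rw [← fiber_card b]
      congr 1
      ext x
      simp only [Finset.mem_filter, Finset.mem_univ, true_and]
      exact ⟨fun ⟨_, h2⟩ => h2, fun h2 => ⟨h2 ▸ hb, h2⟩⟩
    rw [Finset.sum_congr rfl heq, Finset.sum_const, smul_eq_mul, hKcard]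
  obtain ⟨S, hSsub, hScard⟩ := Finset.exists_subset_card_eq
    (s := Finset.univ.filter (fun x => π x ∈ K)) (n := m) (by omega)
  have hSν : (S.image π).card ≤ c := by
    rw [← hKcard]
    apply Finset.card_le_card
    intro b hb
    obtain ⟨x, hx, hxb⟩ := Finset.mem_image.mp hb
    exact hxb ▸ (Finset.mem_filter.mp (hSsub hx)).2
  -- Construct T : meets at least c+1 blocks
  have hk : c + 1 ≤ min m q := by omega
  obtain ⟨K', hK'sub, hK'card⟩ := Finset.exists_subset_card_eq
    (s := (Finset.univ : Finset (Quotient s))) (n := min m q) (by simp [hq])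
  set R := K'.image Quotient.out with hR
  have hRπ : R.image π = K' := by
    rw [hR, Finset.image_image]
    have : π ∘ (Quotient.out : Quotient s → Fin n) = id := by
      funext b; simp [hπ]
    rw [this, Finset.image_id]
  have hout_inj : Function.Injective (Quotient.out : Quotient s → Fin n) := by
    intro p p' hpq
    have := congrArg π hpq
    simpa [hπ] using this
  have hRcard : R.card = min m q := by
    rw [hR, Finset.card_image_of_injective _ hout_inj, hK'card]
  have hsn : R.card ≤ m := by rw [hRcard]; exact min_le_left _ _
  have hnt : m ≤ (Finset.univ : Finset (Fin n)).card := by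
    simp only [Finset.card_univ, Fintype.card_fin]; omega
  obtain ⟨T, hRT, _, hTcard⟩ := Finset.exists_subsuperset_card_eq
    (Finset.subset_univ R) hsn hnt
  have hTν : c + 1 ≤ (T.image π).card := by
    calc c + 1 ≤ min m q := hk
    _ = R.card := hRcard.symm
    _ = (R.image π).card := by rw [hRπ, hK'card, hRcard]
    _ ≤ (T.image π).card := Finset.card_le_card (Finset.image_subset_image hRT)
  -- contradiction
  obtain ⟨a, ha, haST⟩ := h S T hScard hTcard
  have := νinv a ha S
  rw [haST] at this
  omega
end

section
/- Let n be a positive integer, let A be a transitive and imprimitive subgroup of the symmetric group Sym({1,…,n}), and let p be a prime number with 2p > n. Then p does not divide the order of A. -/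
private lemma perm_image_pow {n : ℕ} (σ : Equiv.Perm (Fin n)) (Δ : Finset (Fin n))
    (h : Δ.image ⇑σ = Δ) : ∀ k, Δ.image ⇑(σ ^ k) = Δ := by
  intro k
  induction k with
  | zero => simp
  | succ k ih =>
    have hco : ⇑(σ ^ (k+1)) = ⇑(σ ^ k) ∘ ⇑σ := by
      rw [pow_succ]; rfl
    rw [hco, ← Finset.image_image, h, ih]

private lemma perm_fix_pow {n : ℕ} (σ : Equiv.Perm (Fin n)) (x : Fin n)
    (h : σ x = x) : ∀ k, (σ ^ k) x = x := by
  intro k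
  induction k with
  | zero => simp
  | succ k ih => rw [pow_succ, Equiv.Perm.mul_apply, h, ih]

private lemma exists_inv_mod {p m : ℕ} (hp : p.Prime) (hm : ¬ p ∣ m) :
    ∃ j t, m * j = p * t + 1 := by
  have hcop : Nat.Coprime m p := ((hp.coprime_iff_not_dvd).mpr hm).symm
  obtain ⟨j, -, hj⟩ := Nat.exists_mul_mod_eq_one_of_coprime hcop hp.one_lt
  have hdm := Nat.div_add_mod (m * j) p
  exact ⟨j, m * j / p, by omega⟩

private lemma eq_of_pow_image_eq {n p : ℕ} (hp : p.Prime) (σ : Equiv.Perm (Fin n))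
    (hσ : σ ^ p = 1) (Δ : Finset (Fin n)) (m : ℕ) (hm : ¬ p ∣ m)
    (h : Δ.image ⇑(σ ^ m) = Δ) : Δ.image ⇑σ = Δ := by
  obtain ⟨j, t, hjt⟩ := exists_inv_mod hp hm
  have h1 : Δ.image ⇑((σ ^ m) ^ j) = Δ := perm_image_pow (σ ^ m) Δ h j
  have h2 : (σ ^ m) ^ j = σ := by
    rw [← pow_mul, hjt, pow_add, pow_mul, hσ, one_pow, one_mul, pow_one]
  rwa [h2] at h1

private lemma fix_of_pow_fix {n p : ℕ} (hp : p.Prime) (σ : Equiv.Perm (Fin n))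
    (hσ : σ ^ p = 1) (x : Fin n) (m : ℕ) (hm : ¬ p ∣ m)
    (h : (σ ^ m) x = x) : σ x = x := by
  obtain ⟨j, t, hjt⟩ := exists_inv_mod hp hm
  have h1 : ((σ ^ m) ^ j) x = x := perm_fix_pow (σ ^ m) x h j
  have h2 : (σ ^ m) ^ j = σ := by
    rw [← pow_mul, hjt, pow_add, pow_mul, hσ, one_pow, one_mul, pow_one]
  rwa [h2] at h1

/-- If `A` is a transitive, imprimitive subgroup of `Sym({1,…,n})` and `p` is a prime with
`2p > n`, then `p` does not divide the order of `A`. -/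
theorem prime_not_dvd_card_of_imprimitive
    (n : ℕ) (hn : 0 < n)
    (A : Subgroup (Equiv.Perm (Fin n)))
    (htrans : ∀ x y : Fin n, ∃ a ∈ A, a x = y)
    (himprim : ∃ Δ : Finset (Fin n), 1 < Δ.card ∧ Δ.card < n ∧
      ∀ a ∈ A, Δ.image (a : Fin n → Fin n) = Δ ∨ Disjoint (Δ.image (a : Fin n → Fin n)) Δ)
    (p : ℕ) (hp : p.Prime) (hpn : n < 2 * p) :
    ¬ p ∣ Nat.card A := by
  intro hdvd
  obtain ⟨Δ, hΔ1, hΔn, hblock⟩ := himprim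
  haveI : Fact p.Prime := ⟨hp⟩
  haveI : Fintype ↥A := Fintype.ofFinite ↥A
  rw [Nat.card_eq_fintype_card] at hdvd
  obtain ⟨g, hg⟩ := exists_prime_orderOf_dvd_card p hdvd
  set σ : Equiv.Perm (Fin n) := (g : Equiv.Perm (Fin n)) with hσdef
  have hσA : σ ∈ A := SetLike.coe_mem g
  have hσp : σ ^ p = 1 := by
    have h := pow_orderOf_eq_one g
    rw [hg] at h
    have := congrArg (fun z : A => (z : Equiv.Perm (Fin n))) h
    simpa using this
  have hσne : σ ≠ 1 := by
    intro h
    have hg1 : g = 1 := Subtype.ext h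
    rw [hg1, orderOf_one] at hg
    exact absurd hg.symm hp.one_lt.ne'
  obtain ⟨x, hx⟩ : ∃ x, σ x ≠ x := by
    by_contra h
    push_neg at h
    exact hσne (Equiv.ext h)
  obtain ⟨x0, hx0⟩ : ∃ x0, x0 ∈ Δ := Finset.card_pos.mp (by omega)
  obtain ⟨b, hbA, hbx⟩ := htrans x0 x
  set c : Equiv.Perm (Fin n) := b⁻¹ * σ * b with hcdef
  have hcA : c ∈ A := A.mul_mem (A.mul_mem (A.inv_mem hbA) hσA) hbA
  have hconj : ∀ k : ℕ, c ^ k = b⁻¹ * σ ^ k * b := by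
    intro k
    induction k with
    | zero => simp
    | succ k ih => rw [pow_succ, pow_succ, ih, hcdef]; group
  have hcp : c ^ p = 1 := by rw [hconj, hσp]; group
  have hcx0 : c x0 ≠ x0 := by
    intro h
    apply hx
    have h2 : b (c x0) = b x0 := congrArg b h
    rw [hcdef] at h2
    simp only [Equiv.Perm.mul_apply, Equiv.Perm.inv_def, Equiv.apply_symm_apply] at h2
    rwa [hbx] at h2
  -- 2 * |Δ| ≤ n
  have h2d : 2 * Δ.card ≤ n := by
    have hne : Δ ≠ Finset.univ := by
      intro h
      rw [h, Finset.card_univ, Fintype.card_fin] at hΔn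
      omega
    obtain ⟨y, hy⟩ : ∃ y, y ∉ Δ := by
      by_contra h
      push_neg at h
      exact hne (Finset.eq_univ_iff_forall.mpr h)
    obtain ⟨b', hb'A, hb'⟩ := htrans x0 y
    have himg : Δ.image ⇑b' ≠ Δ := by
      intro h
      apply hy
      rw [← h]
      rw [← hb']
      exact Finset.mem_image_of_mem _ hx0
    have hdisj := (hblock b' hb'A).resolve_left himg
    have hcard : (Δ.image ⇑b').card = Δ.card :=
      Finset.card_image_of_injective _ b'.injective
    have hu := Finset.card_union_of_disjoint hdisj
    have hle : (Δ.image ⇑b' ∪ Δ).card ≤ n := by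
      have := Finset.card_le_univ (Δ.image ⇑b' ∪ Δ)
      simpa using this
    omega
  rcases hblock c hcA with h1 | h1
  · -- c fixes Δ; orbit of x0 has p distinct points inside Δ
    have horb : ∀ k, (c ^ k) x0 ∈ Δ := by
      intro k
      have h := perm_image_pow c Δ h1 k
      rw [← h]
      exact Finset.mem_image_of_mem _ hx0
    have key : ∀ i j, i < j → j < p → (c ^ i) x0 ≠ (c ^ j) x0 := by
      intro i j hij hjp heq
      have hfix : (c ^ (j - i)) x0 = x0 := by
        apply (c ^ i).injective
        rw [← Equiv.Perm.mul_apply, ← pow_add]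
        have : i + (j - i) = j := by omega
        rw [this, ← heq]
      have hm : ¬ p ∣ (j - i) := by
        intro hd
        have := Nat.le_of_dvd (by omega) hd
        omega
      exact hcx0 (fix_of_pow_fix hp c hcp x0 (j - i) hm hfix)
    have hinj : Set.InjOn (fun k => (c ^ k) x0) ↑(Finset.range p) := by
      intro i hi j hj h
      simp only [Finset.coe_range, Set.mem_Iio] at hi hj
      by_contra hne
      rcases lt_or_gt_of_ne hne with hlt | hlt
      · exact key i j hlt hj h
      · exact key j i hlt hi h.symm
    have hle : p ≤ Δ.card := by
      have := Finset.card_le_card_of_injOn (fun k => (c ^ k) x0)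
        (fun k _ => horb k) hinj
      simpa using this
    omega
  · -- translates of Δ under powers of c are pairwise disjoint
    have hΔne : Δ ≠ ∅ := by
      intro h
      rw [h] at hΔ1
      simp at hΔ1
    have hdis : ∀ m, ¬ p ∣ m → Disjoint (Δ.image ⇑(c ^ m)) Δ := by
      intro m hm
      rcases hblock (c ^ m) (pow_mem hcA m) with h | h
      · exfalso
        have := eq_of_pow_image_eq hp c hcp Δ m hm h
        rw [this] at h1
        exact hΔne ((Finset.disjoint_self_iff_empty _).mp h1)
      · exact h
    have hpair : ∀ i ∈ Finset.range p, ∀ j ∈ Finset.range p, i ≠ j →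
        Disjoint (Δ.image ⇑(c ^ i)) (Δ.image ⇑(c ^ j)) := by
      have key : ∀ i j, i < j → j < p →
          Disjoint (Δ.image ⇑(c ^ i)) (Δ.image ⇑(c ^ j)) := by
        intro i j hij hjp
        have heq : Δ.image ⇑(c ^ j) = (Δ.image ⇑(c ^ (j - i))).image ⇑(c ^ i) := by
          rw [Finset.image_image]
          have h2 : c ^ j = c ^ i * c ^ (j - i) := by
            rw [← pow_add]
            congr 1
            omega
          rw [h2]
          rfl
        rw [heq]
        have hd := hdis (j - i) (by
          intro hd
          have := Nat.le_of_dvd (by omega) hd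
          omega)
        nth_rewrite 1 [show Δ.image ⇑(c ^ i) = Δ.image ⇑(c ^ i) from rfl]
        rw [Finset.disjoint_image (c ^ i).injective]
        exact hd.symm
      intro i hi j hj hne
      rcases lt_or_gt_of_ne hne with hlt | hlt
      · exact key i j hlt (Finset.mem_range.mp hj)
      · exact (key j i hlt (Finset.mem_range.mp hi)).symm
    have hcard : ((Finset.range p).biUnion (fun k => Δ.image ⇑(c ^ k))).card
        = p * Δ.card := by
      rw [Finset.card_biUnion hpair]
      have h2 : ∀ k, (Δ.image ⇑(c ^ k)).card = Δ.card := fun k =>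
        Finset.card_image_of_injective _ (c ^ k).injective
      simp [h2, Finset.sum_const, Finset.card_range, mul_comm]
    have hle : p * Δ.card ≤ n := by
      rw [← hcard]
      have := Finset.card_le_univ ((Finset.range p).biUnion (fun k => Δ.image ⇑(c ^ k)))
      simpa using this
    have h2p : 2 * p ≤ p * Δ.card := by
      calc 2 * p = p * 2 := by ring
      _ ≤ p * Δ.card := Nat.mul_le_mul_left p (by omega)
    omega
end
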